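/- arXiv:2511.19212 — 2 statements merged into one kernel-verified Lean document; each statement's English description precedes it below -/
import Mathlib

section
/- For the 6-state VASS 𝒱 constructed from DFAs 𝒟₁, …, 𝒟ₖ in the intersection-nonemptiness reduction, the following invariant holds: in every configuration of the form p(z) reachable from the initial configuration p(u) (where u sets x_i = 1, y_i = s − 1 for all i), the counters satisfy x_i + y_i = s and x_i ≥ 1 for all i ∈ {1,…,k}. -/
/-- States of the VASS constructed from `k` DFAs with `s` states each over alphabet `A`. -/
inductive RSt (A : Type) (k s : ℕ) where
  | p : RSt A k s
  | q : RSt A k s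
  | secStart (σ : A) (i : Fin k) : RSt A k s
  | secMid (σ : A) (i : Fin k) (a : Fin s) : RSt A k s
  | secEnd (σ : A) (i : Fin k) : RSt A k s
  | chkStart (i : Fin k) : RSt A k s
  | chkEnd (i : Fin k) : RSt A k s

/-- Update vector touching only the pair of counters `x_i` (index `(i, true)`)
and `y_i` (index `(i, false)`). -/
def upd {k : ℕ} (i : Fin k) (x y : ℤ) : Fin k × Bool → ℤ :=
  fun j => if j = (i, true) then x else if j = (i, false) then y else 0

/-- Transitions of the constructed `2k`-VASS.  The DFAs are given by partial
deterministic transition functions `δ i : Fin s → A → Option (Fin s)` and final-state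
sets `F i`; state `a : Fin s` of automaton `i` is numbered `a.val + 1 ∈ {1,…,s}`. -/
inductive RTrans {A : Type} {k s : ℕ} (δ : Fin k → Fin s → A → Option (Fin s))
    (F : Fin k → Finset (Fin s)) :
    RSt A k s → (Fin k × Bool → ℤ) → RSt A k s → Prop where
  | toSec (σ : A) (h : 0 < k) :
      RTrans δ F .p 0 (.secStart σ ⟨0, h⟩)
  | secIn (σ : A) (i : Fin k) (a b : Fin s) (hab : δ i a σ = some b) :
      RTrans δ F (.secStart σ i)
        (upd i (-((a.val : ℤ) + 1)) (-((s - (a.val + 1) : ℕ) : ℤ))) (.secMid σ i a)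
  | secOut (σ : A) (i : Fin k) (a b : Fin s) (hab : δ i a σ = some b) :
      RTrans δ F (.secMid σ i a)
        (upd i ((b.val : ℤ) + 1) ((s - (b.val + 1) : ℕ) : ℤ)) (.secEnd σ i)
  | secNext (σ : A) (i : Fin k) (h : i.val + 1 < k) :
      RTrans δ F (.secEnd σ i) 0 (.secStart σ ⟨i.val + 1, h⟩)
  | secBack (σ : A) (h : 0 < k) :
      RTrans δ F (.secEnd σ ⟨k - 1, by omega⟩) 0 .p
  | toChk (h : 0 < k) :
      RTrans δ F .p 0 (.chkStart ⟨0, h⟩)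
  | chk (i : Fin k) (f : Fin s) (hf : f ∈ F i) :
      RTrans δ F (.chkStart i)
        (upd i (-((f.val : ℤ) + 1)) (-((s - (f.val + 1) : ℕ) : ℤ))) (.chkEnd i)
  | chkNext (i : Fin k) (h : i.val + 1 < k) :
      RTrans δ F (.chkEnd i) 0 (.chkStart ⟨i.val + 1, h⟩)
  | chkDone (h : 0 < k) :
      RTrans δ F (.chkEnd ⟨k - 1, by omega⟩) 0 .q

/-- One step of the constructed VASS. -/
def RStep {A : Type} {k s : ℕ} (δ : Fin k → Fin s → A → Option (Fin s))
    (F : Fin k → Finset (Fin s))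
    (c c' : RSt A k s × (Fin k × Bool → ℕ)) : Prop :=
  ∃ x, RTrans δ F c.1 x c'.1 ∧ ∀ j, (c'.2 j : ℤ) = (c.2 j : ℤ) + x j

def RReach {A : Type} {k s : ℕ} (δ : Fin k → Fin s → A → Option (Fin s))
    (F : Fin k → Finset (Fin s)) :
    RSt A k s × (Fin k × Bool → ℕ) → RSt A k s × (Fin k × Bool → ℕ) → Prop :=
  Relation.ReflTransGen (RStep δ F)

/-- The initial counter values: `x_i = 1`, `y_i = s - 1` for all `i`. -/
def initCnt (k s : ℕ) : Fin k × Bool → ℕ := fun j => if j.2 then 1 else s - 1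

/-- Good counter valuation: each pair sums to `s` and `x` component is positive. -/
def RGood {k : ℕ} (s : ℕ) (z : Fin k × Bool → ℕ) : Prop :=
  ∀ j : Fin k, z (j, true) + z (j, false) = s ∧ 1 ≤ z (j, true)

/-- Invariant indexed by the control state. -/
def RInv {A : Type} {k s : ℕ} (c : RSt A k s × (Fin k × Bool → ℕ)) : Prop :=
  match c.1 with
  | .p => RGood s c.2
  | .secStart _ _ => RGood s c.2
  | .secEnd _ _ => RGood s c.2
  | .secMid _ i _ =>
      (∀ j : Fin k, j ≠ i → c.2 (j, true) + c.2 (j, false) = s ∧ 1 ≤ c.2 (j, true)) ∧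
      c.2 (i, true) = 0 ∧ c.2 (i, false) = 0
  | _ => True

lemma RInv_step {A : Type} {k s : ℕ} {δ : Fin k → Fin s → A → Option (Fin s)}
    {F : Fin k → Finset (Fin s)} {c c' : RSt A k s × (Fin k × Bool → ℕ)}
    (h : RStep δ F c c') (hc : RInv c) : RInv c' := by
  obtain ⟨x, ht, hx⟩ := h
  obtain ⟨st, z⟩ := c
  obtain ⟨st', z'⟩ := c'
  simp only at ht hx
  have hzero : x = 0 → ∀ j, z' j = z j := by
    intro h0 j
    have := hx j
    rw [h0] at this
    simpa using this
  dsimp only [RInv] at hc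
  cases ht with
  | toSec σ h =>
      intro j; dsimp only; rw [hzero rfl, hzero rfl]; exact hc j
  | secIn σ i a b hab =>
      dsimp only [RInv]
      refine ⟨fun j hj => ?_, ?_, ?_⟩
      · have h1 := hx (j, true)
        have h2 := hx (j, false)
        have e1 : upd i (-((a.val : ℤ) + 1)) (-((s - (a.val + 1) : ℕ) : ℤ)) (j, true) = 0 := by
          simp [upd, Prod.ext_iff, hj]
        have e2 : upd i (-((a.val : ℤ) + 1)) (-((s - (a.val + 1) : ℕ) : ℤ)) (j, false) = 0 := by
          simp [upd, Prod.ext_iff, hj]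
        rw [e1] at h1; rw [e2] at h2
        have := hc j
        omega
      · have h1 := hx (i, true)
        have h2 := hx (i, false)
        have e1 : upd i (-((a.val : ℤ) + 1)) (-((s - (a.val + 1) : ℕ) : ℤ)) (i, true)
            = -((a.val : ℤ) + 1) := by simp [upd]
        have e2 : upd i (-((a.val : ℤ) + 1)) (-((s - (a.val + 1) : ℕ) : ℤ)) (i, false)
            = -((s - (a.val + 1) : ℕ) : ℤ) := by simp [upd]
        rw [e1] at h1; rw [e2] at h2
        have := hc i
        have ha := a.isLt
        omega
      · have h1 := hx (i, true)
        have h2 := hx (i, false)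
        have e1 : upd i (-((a.val : ℤ) + 1)) (-((s - (a.val + 1) : ℕ) : ℤ)) (i, true)
            = -((a.val : ℤ) + 1) := by simp [upd]
        have e2 : upd i (-((a.val : ℤ) + 1)) (-((s - (a.val + 1) : ℕ) : ℤ)) (i, false)
            = -((s - (a.val + 1) : ℕ) : ℤ) := by simp [upd]
        rw [e1] at h1; rw [e2] at h2
        have := hc i
        have ha := a.isLt
        omega
  | secOut σ i a b hab =>
      dsimp only [RInv] at hc ⊢
      obtain ⟨hrest, hxi, hyi⟩ := hc
      intro j
      by_cases hj : j = i
      · subst hj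
        have h1 := hx (j, true)
        have h2 := hx (j, false)
        have e1 : upd j ((b.val : ℤ) + 1) ((s - (b.val + 1) : ℕ) : ℤ) (j, true)
            = (b.val : ℤ) + 1 := by simp [upd]
        have e2 : upd j ((b.val : ℤ) + 1) ((s - (b.val + 1) : ℕ) : ℤ) (j, false)
            = ((s - (b.val + 1) : ℕ) : ℤ) := by simp [upd]
        rw [e1] at h1; rw [e2] at h2
        have hb := b.isLt
        omega
      · have h1 := hx (j, true)
        have h2 := hx (j, false)
        have e1 : upd i ((b.val : ℤ) + 1) ((s - (b.val + 1) : ℕ) : ℤ) (j, true) = 0 := by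
          simp [upd, Prod.ext_iff, hj]
        have e2 : upd i ((b.val : ℤ) + 1) ((s - (b.val + 1) : ℕ) : ℤ) (j, false) = 0 := by
          simp [upd, Prod.ext_iff, hj]
        rw [e1] at h1; rw [e2] at h2
        have := hrest j hj
        omega
  | secNext σ i h =>
      intro j; dsimp only; rw [hzero rfl, hzero rfl]; exact hc j
  | secBack σ h =>
      intro j; dsimp only; rw [hzero rfl, hzero rfl]; exact hc j
  | toChk h => trivial
  | chk i f hf => trivial
  | chkNext i h => trivial
  | chkDone h => trivial

lemma RInv_reach {A : Type} {k s : ℕ} {δ : Fin k → Fin s → A → Option (Fin s)}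
    {F : Fin k → Finset (Fin s)} {c c' : RSt A k s × (Fin k × Bool → ℕ)}
    (h : RReach δ F c c') (hc : RInv c) : RInv c' := by
  induction h with
  | refl => exact hc
  | tail _ hstep ih => exact RInv_step hstep ih

/-- Invariant of the reduction: in every configuration `p(z)` reachable from the
initial configuration `p(u)`, the counters satisfy `x_i + y_i = s` and `x_i ≥ 1`. -/
theorem reduction_invariant {A : Type} {k s : ℕ}
    (δ : Fin k → Fin s → A → Option (Fin s)) (F : Fin k → Finset (Fin s))
    (hs : 0 < s)
    (z : Fin k × Bool → ℕ)
    (h : RReach δ F (.p, initCnt k s) (.p, z)) :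
    ∀ i : Fin k, z (i, true) + z (i, false) = s ∧ 1 ≤ z (i, true) := by
  have h0 : RInv ((RSt.p : RSt A k s), initCnt k s) := by
    intro j
    simp only [initCnt]
    refine ⟨?_, ?_⟩ <;> simp <;> omega
  exact RInv_reach h h0
end

section
/- Correctness of the DFA-intersection-to-VASS-coverability reduction: there exists a word w over Σ accepted by all of the DFAs 𝒟₁, …, 𝒟ₖ if and only if there is a run of the constructed 2k-VASS 𝒱 from configuration p(u) to some configuration with state q, where u assigns x_i = 1 and y_i = s − 1 for each i. -/
/-- Run of the (partial, deterministic) DFA `δi` on a word, from a given state. -/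
def dfaRun {A : Type} {s : ℕ} (δi : Fin s → A → Option (Fin s)) :
    Fin s → List A → Option (Fin s)
  | q0, [] => some q0
  | q0, a :: w => (δi q0 a).bind fun q1 => dfaRun δi q1 w

namespace Red

variable {A : Type} {k s : ℕ}

/-- Counter valuation encoding a state vector: `x_i = st i + 1`, `y_i = s - (st i + 1)`. -/
def cnt (st : Fin k → Fin s) : Fin k × Bool → ℕ :=
  fun jb => if jb.2 then (st jb.1).val + 1 else s - ((st jb.1).val + 1)

/-- A state vector is jointly reachable by some word from the initial states. -/
def Word (δ : Fin k → Fin s → A → Option (Fin s)) (hs : 0 < s)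
    (st : Fin k → Fin s) : Prop :=
  ∃ w : List A, ∀ i, dfaRun (δ i) ⟨0, hs⟩ w = some (st i)

lemma dfaRun_append (δi : Fin s → A → Option (Fin s)) (w : List A) (σ : A) (q0 : Fin s) :
    dfaRun δi q0 (w ++ [σ]) = (dfaRun δi q0 w).bind (fun q1 => δi q1 σ) := by
  induction w generalizing q0 with
  | nil => simp [dfaRun]
  | cons a w ih =>
    show (δi q0 a).bind _ = ((δi q0 a).bind _).bind _
    cases δi q0 a <;> simp [ih]

lemma Word.step {δ : Fin k → Fin s → A → Option (Fin s)} {hs : 0 < s}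
    {st0 st : Fin k → Fin s} (hA : Word δ hs st0) (σ : A)
    (h : ∀ j, δ j (st0 j) σ = some (st j)) : Word δ hs st := by
  obtain ⟨w, hw⟩ := hA
  exact ⟨w ++ [σ], fun i => by rw [dfaRun_append, hw i, Option.bind_some, h i]⟩

lemma forced {s : ℕ} (st a : Fin s) (vx vy : ℕ)
    (hx : (vx : ℤ) = ((st.val : ℤ) + 1) + (-((a.val : ℤ) + 1)))
    (hy : (vy : ℤ) = ((s - (st.val + 1) : ℕ) : ℤ) + (-((s - (a.val + 1) : ℕ) : ℤ))) :
    a = st ∧ vx = 0 ∧ vy = 0 := by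
  have h1 := st.isLt; have h2 := a.isLt
  refine ⟨Fin.ext ?_, ?_, ?_⟩ <;> omega

/-- The run invariant. -/
def Inv (δ : Fin k → Fin s → A → Option (Fin s)) (F : Fin k → Finset (Fin s)) (hs : 0 < s) :
    RSt A k s × (Fin k × Bool → ℕ) → Prop := fun c =>
  match c with
  | (.p, v) => ∃ st, Word δ hs st ∧ v = cnt st
  | (.secStart σ i, v) => ∃ st0 st, Word δ hs st0 ∧
      (∀ j, if j < i then δ j (st0 j) σ = some (st j) else st j = st0 j) ∧ v = cnt st
  | (.secMid σ i a, v) => ∃ st0 st, Word δ hs st0 ∧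
      (∀ j, if j < i then δ j (st0 j) σ = some (st j) else st j = st0 j) ∧ a = st0 i ∧
      v = fun jb => if jb.1 = i then 0 else cnt st jb
  | (.secEnd σ i, v) => ∃ st0 st, Word δ hs st0 ∧
      (∀ j, if j ≤ i then δ j (st0 j) σ = some (st j) else st j = st0 j) ∧ v = cnt st
  | (.chkStart i, v) => ∃ st, Word δ hs st ∧ (∀ j, j < i → st j ∈ F j) ∧
      v = fun jb => if jb.1 < i then 0 else cnt st jb
  | (.chkEnd i, v) => ∃ st, Word δ hs st ∧ (∀ j, j ≤ i → st j ∈ F j) ∧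
      v = fun jb => if jb.1 ≤ i then 0 else cnt st jb
  | (.q, _) => ∃ st, Word δ hs st ∧ ∀ j, st j ∈ F j

end Red
namespace Red

variable {A : Type} {k s : ℕ} {δ : Fin k → Fin s → A → Option (Fin s)}
  {F : Fin k → Finset (Fin s)} {hs : 0 < s}

lemma val_eq_of_zero {v v' : Fin k × Bool → ℕ}
    (heq : ∀ j, (v' j : ℤ) = (v j : ℤ) + (0 : Fin k × Bool → ℤ) j) : v' = v := by
  funext j
  have := heq j
  simp only [Pi.zero_apply, add_zero] at this
  exact_mod_cast this

lemma inv_step {c1 c1' : RSt A k s} {v v' : Fin k × Bool → ℕ} {x : Fin k × Bool → ℤ}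
    (htr : RTrans δ F c1 x c1') (heq : ∀ j, (v' j : ℤ) = (v j : ℤ) + x j)
    (hc : Inv δ F hs (c1, v)) : Inv δ F hs (c1', v') := by
  cases htr with
  | toSec σ h =>
    obtain ⟨st, hA, hv⟩ := hc
    refine ⟨st, st, hA, fun j => ?_, by rw [val_eq_of_zero heq, hv]⟩
    rw [if_neg (by simp [Fin.lt_def])]
  | secIn σ i a b hab =>
    obtain ⟨st0, st, hA, hδ, hv⟩ := hc
    subst hv
    have hx := heq (i, true)
    have hy := heq (i, false)
    simp only [upd, if_pos rfl, cnt, Prod.mk.injEq, and_false, if_false,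
      if_true, and_true, if_neg (by simp : ¬ ((i, false) : Fin k × Bool) = (i, true))] at hx hy
    obtain ⟨hast, hx0, hy0⟩ := forced (st i) a _ _ (by exact_mod_cast hx) (by exact_mod_cast hy)
    have hsti : st i = st0 i := by have := hδ i; rwa [if_neg (lt_irrefl i)] at this
    refine ⟨st0, st, hA, hδ, by rw [hast, hsti], ?_⟩
    funext jb
    obtain ⟨j, bb⟩ := jb
    by_cases hj : j = i
    · subst hj
      cases bb
      · simpa using hy0
      · simpa using hx0
    · have h3 := heq (j, bb)
      simp only [upd, Prod.mk.injEq, hj, false_and, if_false, add_zero] at h3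
      simp only [hj, if_false]
      exact_mod_cast h3
  | secOut σ i a b hab =>
    obtain ⟨st0, st, hA, hδ, ha, hv⟩ := hc
    subst hv
    refine ⟨st0, Function.update st i b, hA, fun j => ?_, ?_⟩
    · by_cases hj : j = i
      · subst hj
        rw [if_pos (le_refl j), Function.update_self, ← ha]
        exact hab
      · rw [Function.update_of_ne hj]
        have h2 := hδ j
        by_cases hji : j ≤ i
        · rw [if_pos hji]
          rwa [if_pos (lt_of_le_of_ne hji hj)] at h2
        · rw [if_neg hji]
          rwa [if_neg (fun hlt => hji (le_of_lt hlt))] at h2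
    · funext jb
      obtain ⟨j, bb⟩ := jb
      have h3 := heq (j, bb)
      by_cases hj : j = i
      · subst hj
        cases bb
        · have h4 : (v' (j, false) : ℤ) = ((s - (b.val + 1) : ℕ) : ℤ) := by
            simpa [upd] using h3
          simp only [cnt, Function.update_self]
          exact_mod_cast h4
        · have h4 : (v' (j, true) : ℤ) = (b.val : ℤ) + 1 := by
            simpa [upd] using h3
          simp only [cnt, Function.update_self]
          exact_mod_cast h4
      · simp only [upd, Prod.mk.injEq, hj, false_and, if_false, add_zero] at h3
        simp only [cnt, Function.update_of_ne hj]
        have : v' (j, bb) = cnt st (j, bb) := by exact_mod_cast h3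
        simpa [cnt] using this
  | secNext σ i h =>
    obtain ⟨st0, st, hA, hδ, hv⟩ := hc
    refine ⟨st0, st, hA, fun j => ?_, by rw [val_eq_of_zero heq, hv]⟩
    have h2 := hδ j
    have hiff : j < (⟨i.val + 1, h⟩ : Fin k) ↔ j ≤ i := by
      rw [Fin.lt_def, Fin.le_def]
      exact Nat.lt_succ_iff
    by_cases hji : j ≤ i
    · rw [if_pos (hiff.mpr hji)]
      rwa [if_pos hji] at h2
    · rw [if_neg (fun hh => hji (hiff.mp hh))]
      rwa [if_neg hji] at h2
  | secBack σ h =>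
    obtain ⟨st0, st, hA, hδ, hv⟩ := hc
    refine ⟨st, hA.step σ (fun j => ?_), by rw [val_eq_of_zero heq, hv]⟩
    have h2 := hδ j
    rwa [if_pos (Fin.le_def.mpr (show j.val ≤ k - 1 by have := j.isLt; omega))] at h2
  | toChk h =>
    obtain ⟨st, hA, hv⟩ := hc
    refine ⟨st, hA, fun j hj => absurd hj (by simp [Fin.lt_def]), ?_⟩
    rw [val_eq_of_zero heq, hv]
    funext jb
    rw [if_neg (by simp [Fin.lt_def])]
  | chk i f hf =>
    obtain ⟨st, hA, hF, hv⟩ := hc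
    subst hv
    have hx := heq (i, true)
    have hy := heq (i, false)
    simp only [upd, if_pos rfl, lt_irrefl, if_false, cnt, Prod.mk.injEq, and_false,
      if_true, and_true, if_neg (by simp : ¬ ((i, false) : Fin k × Bool) = (i, true))] at hx hy
    obtain ⟨hfst, hx0, hy0⟩ := forced (st i) f _ _ (by exact_mod_cast hx) (by exact_mod_cast hy)
    refine ⟨st, hA, fun j hj => ?_, ?_⟩
    · rcases lt_or_eq_of_le hj with h' | h'
      · exact hF j h'
      · subst h'
        exact hfst ▸ hf
    · funext jb
      obtain ⟨j, bb⟩ := jb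
      by_cases hj : j = i
      · subst hj
        rw [if_pos (le_refl j)]
        cases bb
        · simpa using hy0
        · simpa using hx0
      · have h3 := heq (j, bb)
        simp only [upd, Prod.mk.injEq, hj, false_and, if_false, add_zero] at h3
        have hne : j.val ≠ i.val := fun hh => hj (Fin.ext hh)
        have hgoal : (if (j, bb).1 ≤ i then 0 else cnt st (j, bb)) =
            (if j < i then 0 else cnt st (j, bb)) := by
          by_cases hji : j < i
          · rw [if_pos (le_of_lt hji), if_pos hji]
          · rw [if_neg (fun hle => hji (lt_of_le_of_ne hle hj)), if_neg hji]
        rw [hgoal]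
        exact_mod_cast h3
  | chkNext i h =>
    obtain ⟨st, hA, hF, hv⟩ := hc
    subst hv
    have hv' := val_eq_of_zero heq
    have hiff : ∀ j : Fin k, j < (⟨i.val + 1, h⟩ : Fin k) ↔ j ≤ i := fun j => by
      rw [Fin.lt_def, Fin.le_def]
      exact Nat.lt_succ_iff
    refine ⟨st, hA, fun j hj => hF j ((hiff j).mp hj), ?_⟩
    rw [hv']
    funext jb
    by_cases hji : jb.1 ≤ i
    · rw [if_pos hji, if_pos ((hiff jb.1).mpr hji)]
    · rw [if_neg hji, if_neg (fun hh => hji ((hiff jb.1).mp hh))]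
  | chkDone h =>
    obtain ⟨st, hA, hF, hv⟩ := hc
    exact ⟨st, hA, fun j => hF j (Fin.le_def.mpr (show j.val ≤ k - 1 by have := j.isLt; omega))⟩

end Red
namespace Red

variable {A : Type} {k s : ℕ} {δ : Fin k → Fin s → A → Option (Fin s)}
  {F : Fin k → Finset (Fin s)}

/-- Counters during a σ-section: automata `< n` already updated. -/
def mix (st st' : Fin k → Fin s) (n : ℕ) : Fin k × Bool → ℕ :=
  fun jb => if jb.1.val < n then cnt st' jb else cnt st jb

/-- Counters during checking: automata `< n` already zeroed out. -/
def zer (st : Fin k → Fin s) (n : ℕ) : Fin k × Bool → ℕ :=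
  fun jb => if jb.1.val < n then 0 else cnt st jb

lemma sec_two (σ : A) (st st' : Fin k → Fin s)
    (h : ∀ i, δ i (st i) σ = some (st' i)) (i : Fin k) :
    RReach δ F (.secStart σ i, mix st st' i.val) (.secEnd σ i, mix st st' (i.val + 1)) := by
  have hslt := (st i).isLt
  have hslt' := (st' i).isLt
  have s1 : RStep δ F (.secStart σ i, mix st st' i.val)
      (.secMid σ i (st i), fun jb => if jb.1 = i then 0 else mix st st' i.val jb) := by
    refine ⟨_, RTrans.secIn σ i (st i) (st' i) (h i), fun jb => ?_⟩
    obtain ⟨j, bb⟩ := jb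
    by_cases hj : j = i
    · subst hj
      cases bb <;> simp [upd, mix, cnt] <;> push_cast <;> omega
    · simp [upd, Prod.ext_iff, hj]
  have s2 : RStep δ F (.secMid σ i (st i), fun jb => if jb.1 = i then 0 else mix st st' i.val jb)
      (.secEnd σ i, mix st st' (i.val + 1)) := by
    refine ⟨_, RTrans.secOut σ i (st i) (st' i) (h i), fun jb => ?_⟩
    obtain ⟨j, bb⟩ := jb
    by_cases hj : j = i
    · subst hj
      cases bb <;> simp [upd, mix, cnt] <;> push_cast <;> omega
    · have hne : j.val ≠ i.val := fun hh => hj (Fin.ext hh)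
      have hiff : (j.val < i.val + 1) = (j.val < i.val) := by
        simp only [eq_iff_iff]; omega
      simp [upd, Prod.ext_iff, hj, mix, hiff]
  exact Relation.ReflTransGen.head s1 (Relation.ReflTransGen.single s2)

lemma sec_all (σ : A) (st st' : Fin k → Fin s)
    (h : ∀ i, δ i (st i) σ = some (st' i)) :
    ∀ n (iv : ℕ) (hiv : iv < k), k - iv = n + 1 →
      RReach δ F (.secStart σ ⟨iv, hiv⟩, mix st st' iv) (.p, cnt st') := by
  intro n
  induction n with
  | zero =>
    intro iv hiv hi
    have hik : iv = k - 1 := by omega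
    refine (sec_two σ st st' h ⟨iv, hiv⟩).trans (Relation.ReflTransGen.single
      ⟨0, ?_, fun jb => ?_⟩)
    · have : (⟨iv, hiv⟩ : Fin k) = ⟨k - 1, by omega⟩ := Fin.ext (by simpa using hik)
      rw [this]
      exact RTrans.secBack σ (by omega)
    · have hjb := jb.1.isLt
      show (cnt st' jb : ℤ) = (mix st st' (iv + 1) jb : ℤ) + 0
      simp only [mix, if_pos (show jb.1.val < iv + 1 by omega), add_zero]
  | succ n ih =>
    intro iv hiv hi
    have hlt : iv + 1 < k := by omega
    refine (sec_two σ st st' h ⟨iv, hiv⟩).trans (Relation.ReflTransGen.head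
      ⟨_, RTrans.secNext σ ⟨iv, hiv⟩ hlt, fun jb => by simp⟩ (ih (iv + 1) hlt (by omega)))

lemma letter_reach (σ : A) (st st' : Fin k → Fin s) (hk : 0 < k)
    (h : ∀ i, δ i (st i) σ = some (st' i)) :
    RReach δ F (.p, cnt st) (.p, cnt st') := by
  have h0 : cnt st = mix st st' (0 : ℕ) := by
    funext jb; simp [mix]
  rw [h0]
  exact Relation.ReflTransGen.head ⟨_, RTrans.toSec σ hk, fun jb => by simp⟩
    (sec_all σ st st' h (k - 1) 0 hk (by omega))

lemma chk_one (st : Fin k → Fin s) (i : Fin k) (hFi : st i ∈ F i) :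
    RStep δ F (.chkStart i, zer st i.val) (.chkEnd i, zer st (i.val + 1)) := by
  have hslt := (st i).isLt
  refine ⟨_, RTrans.chk i (st i) hFi, fun jb => ?_⟩
  obtain ⟨j, bb⟩ := jb
  by_cases hj : j = i
  · subst hj
    cases bb <;> simp [upd, zer, cnt] <;> push_cast <;> omega
  · have hne : j.val ≠ i.val := fun hh => hj (Fin.ext hh)
    have hiff : (j.val < i.val + 1) = (j.val < i.val) := by
      simp only [eq_iff_iff]; omega
    simp [upd, Prod.ext_iff, hj, zer, hiff]

lemma chk_all (st : Fin k → Fin s) (hF : ∀ j, st j ∈ F j) :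
    ∀ n (iv : ℕ) (hiv : iv < k), k - iv = n + 1 →
      RReach δ F (.chkStart ⟨iv, hiv⟩, zer st iv) (.q, zer st k) := by
  intro n
  induction n with
  | zero =>
    intro iv hiv hi
    have hik : iv = k - 1 := by omega
    refine Relation.ReflTransGen.head (chk_one st ⟨iv, hiv⟩ (hF _))
      (Relation.ReflTransGen.single ⟨0, ?_, fun jb => ?_⟩)
    · have : (⟨iv, hiv⟩ : Fin k) = ⟨k - 1, by omega⟩ := Fin.ext (by simpa using hik)
      rw [this]
      exact RTrans.chkDone (by omega)
    · have hjb := jb.1.isLt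
      show (zer st k jb : ℤ) = (zer st (iv + 1) jb : ℤ) + 0
      simp only [zer, if_pos (show jb.1.val < iv + 1 by omega),
        if_pos (show jb.1.val < k by omega), add_zero]
  | succ n ih =>
    intro iv hiv hi
    have hlt : iv + 1 < k := by omega
    exact Relation.ReflTransGen.head (chk_one st ⟨iv, hiv⟩ (hF _))
      (Relation.ReflTransGen.head ⟨_, RTrans.chkNext ⟨iv, hiv⟩ hlt, fun jb => by simp⟩
        (ih (iv + 1) hlt (by omega)))

lemma run_word (hk : 0 < k) :
    ∀ (w : List A) (st stf : Fin k → Fin s),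
      (∀ i, dfaRun (δ i) (st i) w = some (stf i)) →
      RReach δ F (.p, cnt st) (.p, cnt stf) := by
  intro w
  induction w with
  | nil =>
    intro st stf hrun
    have hst : st = stf := funext fun i => by
      have := hrun i
      simp [dfaRun] at this
      exact this
    rw [hst]
    exact Relation.ReflTransGen.refl
  | cons σ w ih =>
    intro st stf hrun
    have hstep : ∀ i, ∃ b, δ i (st i) σ = some b ∧ dfaRun (δ i) b w = some (stf i) := by
      intro i
      have hr := hrun i
      rw [show dfaRun (δ i) (st i) (σ :: w) = (δ i (st i) σ).bind
        (fun q1 => dfaRun (δ i) q1 w) from rfl] at hr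
      cases hδ : δ i (st i) σ with
      | none => rw [hδ] at hr; simp at hr
      | some b =>
        rw [hδ] at hr
        exact ⟨b, rfl, hr⟩
    choose st' h1 h2 using hstep
    exact (letter_reach σ st st' hk h1).trans (ih st' stf h2)

end Red
/-- Correctness of the DFA-intersection-to-VASS-coverability reduction: some word is
accepted by all DFAs iff the constructed VASS has a run from `p(u)` (with `x_i = 1`,
`y_i = s - 1`) to some configuration with state `q`. -/
theorem reduction_correct {A : Type} {k s : ℕ}
    (δ : Fin k → Fin s → A → Option (Fin s)) (F : Fin k → Finset (Fin s))
    (hk : 0 < k) (hs : 0 < s) :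
    (∃ w : List A, ∀ i : Fin k, ∃ qf ∈ F i, dfaRun (δ i) ⟨0, hs⟩ w = some qf) ↔
      ∃ z : Fin k × Bool → ℕ, RReach δ F (.p, initCnt k s) (.q, z) := by
  have hinit : initCnt k s = Red.cnt (fun _ => (⟨0, hs⟩ : Fin s)) := by
    funext jb
    obtain ⟨j, b⟩ := jb
    cases b <;> simp [initCnt, Red.cnt]
  constructor
  · rintro ⟨w, hw⟩
    choose stf hF hrun using hw
    have h1 : RReach δ F (.p, initCnt k s) (.p, Red.cnt stf) := by
      rw [hinit]
      exact Red.run_word hk w _ stf hrun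
    have h2 : RStep δ F (.p, Red.cnt stf) (.chkStart ⟨0, hk⟩, Red.zer stf 0) := by
      refine ⟨0, RTrans.toChk hk, fun jb => ?_⟩
      simp [Red.zer]
    exact ⟨Red.zer stf k,
      h1.trans (Relation.ReflTransGen.head h2 (Red.chk_all stf hF (k - 1) 0 hk (by omega)))⟩
  · rintro ⟨z, hreach⟩
    have hstart : Red.Inv δ F hs (.p, initCnt k s) := by
      refine ⟨fun _ => (⟨0, hs⟩ : Fin s), ⟨[], fun i => rfl⟩, hinit⟩
    have hinvall : ∀ c, RReach δ F (.p, initCnt k s) c → Red.Inv δ F hs c := by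
      intro c hr
      induction hr with
      | refl => exact hstart
      | tail _ hstep ih =>
        obtain ⟨x, htr, heq⟩ := hstep
        exact Red.inv_step htr heq ih
    obtain ⟨st, ⟨w, hw⟩, hF⟩ := hinvall _ hreach
    exact ⟨w, fun i => ⟨st i, hF i, hw i⟩⟩
end
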